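/- Proposition 2: suppose each agent i ∈ {0,1,...,n} has an expected multi-utility preference given by a nonempty compact convex set U_i of nonconstant functions Z → ℝ. If Pareto Incomparability holds (for all lotteries l, l': if l and l' are incomparable for every individual i ∈ {1,...,n}, then they are incomparable for the social planner 0), then for every bi-independent combination (u_i, v_i)_{i=1}^n ∈ Π_i U_i² there exist u_0 ∈ U_0, α, α' ∈ ℝ^n_{≥0} with (α,α') ≠ (0,0), and β ∈ ℝ such that u_0 = Σ_i α_i u_i − Σ_i α'_i v_i + β·1. -/

import Mathlib

set_option maxHeartbeats 1000000


open Finset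

/-- Expected utility of lottery `l` with utility `u`. -/
def EU {Z : Type*} [Fintype Z] (l u : Z → ℝ) : ℝ := ∑ z, l z * u z

/-- `l` is a lottery (probability distribution) on `Z`. -/
def IsLottery {Z : Type*} [Fintype Z] (l : Z → ℝ) : Prop :=
  (∀ z, 0 ≤ l z) ∧ ∑ z, l z = 1

/-- Expected multi-utility preference: `l ≿ l'` under the set `U`. -/
def Pref {Z : Type*} [Fintype Z] (U : Set (Z → ℝ)) (l l' : Z → ℝ) : Prop :=
  ∀ u ∈ U, EU l' u ≤ EU l u

/-- `u` is nonconstant. -/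
def Nonconst {Z : Type*} (u : Z → ℝ) : Prop := ∃ z z', u z ≠ u z'

/-- The "dot product with `y`" linear functional on `Z → ℝ`. -/
noncomputable def dotL {Z : Type*} [Fintype Z] (y : Z → ℝ) : (Z → ℝ) →ₗ[ℝ] ℝ where
  toFun x := ∑ z, x z * y z
  map_add' x x' := by simp [add_mul, Finset.sum_add_distrib]
  map_smul' r x := by simp [Finset.mul_sum, mul_assoc]

lemma dot_sum_swap {Z J : Type*} [Fintype Z] [Fintype J] (x : Z → ℝ)
    (c : J → ℝ) (b : J → Z → ℝ) :
    ∑ z, x z * (∑ j, c j • b j) z = ∑ j, c j * ∑ z, x z * b j z := by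
  simp only [Finset.sum_apply, Pi.smul_apply, smul_eq_mul, Finset.mul_sum]
  rw [Finset.sum_comm]
  exact Finset.sum_congr rfl fun j _ => Finset.sum_congr rfl fun z _ => by ring

theorem pareto_incomparability_implies_bi_utilitarian
    {Z : Type*} [Fintype Z] [Nonempty Z] {n : ℕ} (hn : 0 < n)
    (U : Fin n → Set (Z → ℝ)) (U₀ : Set (Z → ℝ))
    (hUne : ∀ i, (U i).Nonempty) (hU₀ne : U₀.Nonempty)
    (hUcpt : ∀ i, IsCompact (U i)) (hU₀cpt : IsCompact U₀)
    (hUcvx : ∀ i, Convex ℝ (U i)) (hU₀cvx : Convex ℝ U₀)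
    (hUnc : ∀ i, ∀ u ∈ U i, Nonconst u) (hU₀nc : ∀ u ∈ U₀, Nonconst u)
    (hpi : ∀ l l' : Z → ℝ, IsLottery l → IsLottery l' →
      (∀ i, ¬ Pref (U i) l l' ∧ ¬ Pref (U i) l' l) →
      (¬ Pref U₀ l l' ∧ ¬ Pref U₀ l' l)) :
    ∀ u v : Fin n → (Z → ℝ), (∀ i, u i ∈ U i) → (∀ i, v i ∈ U i) →
      LinearIndependent ℝ (fun j : Fin n ⊕ (Fin n ⊕ Unit) =>
        Sum.elim u (Sum.elim v (fun _ => (1 : Z → ℝ))) j) →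
      ∃ u₀ ∈ U₀, ∃ α α' : Fin n → ℝ, ∃ β : ℝ,
        (∀ i, 0 ≤ α i) ∧ (∀ i, 0 ≤ α' i) ∧ ¬ (α = 0 ∧ α' = 0) ∧
        u₀ = fun z => (∑ i, α i * u i z) - (∑ i, α' i * v i z) + β := by
  intro u v hu hv hli
  classical
  set b : (Fin n ⊕ (Fin n ⊕ Unit)) → (Z → ℝ) :=
    Sum.elim u (Sum.elim v fun _ => (1 : Z → ℝ)) with hb
  have hcoef : ∀ g : (Fin n ⊕ (Fin n ⊕ Unit)) → ℝ, (∑ j, g j • b j) = 0 → g = 0 := by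
    intro g hg
    funext j
    exact Fintype.linearIndependent_iff.mp hli g hg j
  set T : ((Fin n ⊕ (Fin n ⊕ Unit)) → ℝ) →ₗ[ℝ] (Z → ℝ) :=
    Fintype.linearCombination ℝ b with hTdef
  have hT : ∀ g, T g = ∑ j, g j • b j := fun g => rfl
  have hTker : LinearMap.ker T = ⊥ := by
    rw [LinearMap.ker_eq_bot']
    intro g hg
    exact hcoef g (by rw [← hT]; exact hg)
  set K : Set ((Fin n ⊕ (Fin n ⊕ Unit)) → ℝ) :=
    {g | (∀ i, 0 ≤ g (Sum.inl i)) ∧ ∀ i, g (Sum.inr (Sum.inl i)) ≤ 0} with hK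
  set C : Set (Z → ℝ) := T '' K with hC
  have hKcl : IsClosed K := by
    have h1 : IsClosed {g : (Fin n ⊕ (Fin n ⊕ Unit)) → ℝ | ∀ i, 0 ≤ g (Sum.inl i)} := by
      have : {g : (Fin n ⊕ (Fin n ⊕ Unit)) → ℝ | ∀ i, 0 ≤ g (Sum.inl i)} =
          ⋂ i : Fin n, {g | 0 ≤ g (Sum.inl i)} := by ext g; simp
      rw [this]
      exact isClosed_iInter fun i => isClosed_le continuous_const (continuous_apply _)
    have h2 : IsClosed {g : (Fin n ⊕ (Fin n ⊕ Unit)) → ℝ | ∀ i, g (Sum.inr (Sum.inl i)) ≤ 0} := by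
      have : {g : (Fin n ⊕ (Fin n ⊕ Unit)) → ℝ | ∀ i, g (Sum.inr (Sum.inl i)) ≤ 0} =
          ⋂ i : Fin n, {g | g (Sum.inr (Sum.inl i)) ≤ 0} := by ext g; simp
      rw [this]
      exact isClosed_iInter fun i => isClosed_le (continuous_apply _) continuous_const
    exact h1.inter h2
  have hKcvx : Convex ℝ K := by
    intro x hx y hy a c ha hc hac
    constructor
    · intro i
      have := hx.1 i; have := hy.1 i
      have : 0 ≤ a * x (Sum.inl i) + c * y (Sum.inl i) :=
        add_nonneg (mul_nonneg ha (hx.1 i)) (mul_nonneg hc (hy.1 i))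
      simpa using this
    · intro i
      have : a * x (Sum.inr (Sum.inl i)) + c * y (Sum.inr (Sum.inl i)) ≤ 0 :=
        add_nonpos (mul_nonpos_of_nonneg_of_nonpos ha (hx.2 i))
          (mul_nonpos_of_nonneg_of_nonpos hc (hy.2 i))
      simpa using this
  have hCcl : IsClosed C :=
    ((T.isClosedEmbedding_of_injective hTker).isClosedMap) K hKcl
  have hCcvx : Convex ℝ C := hKcvx.linear_image T
  -- single coefficient vectors
  have hsingle : ∀ (j : Fin n ⊕ (Fin n ⊕ Unit)) (c : ℝ),
      (∑ j', (Pi.single j c : (Fin n ⊕ (Fin n ⊕ Unit)) → ℝ) j' • b j') = c • b j := by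
    intro j c
    rw [Finset.sum_eq_single j]
    · simp
    · intro j' _ hne
      simp [Pi.single_apply, hne]
    · simp
  have hnd : ¬ Disjoint U₀ C := by
    intro hdisj
    obtain ⟨f, s₁, s₂, hfU, hs, hfC⟩ :=
      geometric_hahn_banach_compact_closed hU₀cvx hU₀cpt hCcvx hCcl hdisj
    have hray : ∀ g ∈ K, s₂ < f (∑ j, g j • b j) := by
      intro g hg
      exact hfC _ ⟨g, hg, (hT g)⟩
    have h0 : s₂ < 0 := by
      have := hray 0 ⟨fun i => le_rfl, fun i => le_rfl⟩
      simpa using this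
    have hs₁0 : s₁ < 0 := lt_trans hs h0
    -- f vanishes on constants
    have hf1 : f (1 : Z → ℝ) = 0 := by
      by_contra h
      have key : ∀ c : ℝ, s₂ < c * f (1 : Z → ℝ) := by
        intro c
        have hm : Pi.single (Sum.inr (Sum.inr ())) c ∈ K :=
          ⟨fun i => by simp [Pi.single_apply], fun i => by simp [Pi.single_apply]⟩
        have := hray _ hm
        rwa [hsingle, map_smul, smul_eq_mul] at this
      have := key ((s₂ - 1) / f (1 : Z → ℝ))
      rw [div_mul_cancel₀ _ h] at this
      linarith
    have hfu : ∀ i, 0 ≤ f (u i) := by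
      intro i
      by_contra h
      push_neg at h
      have hc : 0 < (s₂ - 1) / f (u i) := div_pos_of_neg_of_neg (by linarith) h
      have hm : Pi.single (Sum.inl i) ((s₂ - 1) / f (u i)) ∈ K := by
        constructor
        · intro i'
          simp only [Pi.single_apply]
          split
          · exact hc.le
          · exact le_rfl
        · intro i'
          simp [Pi.single_apply]
      have hlt := hray _ hm
      rw [hsingle, map_smul, smul_eq_mul] at hlt
      have hb' : b (Sum.inl i) = u i := rfl
      rw [hb', div_mul_cancel₀ _ (ne_of_lt h)] at hlt
      linarith
    have hfv : ∀ i, f (v i) ≤ 0 := by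
      intro i
      by_contra h
      push_neg at h
      have hc : (s₂ - 1) / f (v i) < 0 := div_neg_of_neg_of_pos (by linarith) h
      have hm : Pi.single (Sum.inr (Sum.inl i)) ((s₂ - 1) / f (v i)) ∈ K := by
        constructor
        · intro i'
          simp [Pi.single_apply]
        · intro i'
          simp only [Pi.single_apply]
          split
          · exact hc.le
          · exact le_rfl
      have hlt := hray _ hm
      rw [hsingle, map_smul, smul_eq_mul] at hlt
      have hb' : b (Sum.inr (Sum.inl i)) = v i := rfl
      rw [hb', div_mul_cancel₀ _ (ne_of_gt h)] at hlt
      linarith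
    -- Gram map surjectivity: find e with prescribed dot products
    set G : ((Fin n ⊕ (Fin n ⊕ Unit)) → ℝ) →ₗ[ℝ] ((Fin n ⊕ (Fin n ⊕ Unit)) → ℝ) :=
      LinearMap.pi (fun j => (dotL (b j)).comp T) with hG
    have hGapp : ∀ g j, G g j = ∑ z, (T g) z * b j z := fun g j => rfl
    have hGinj : Function.Injective G := by
      rw [injective_iff_map_eq_zero']
      intro g
      constructor
      · intro hg
        have hz : ∀ j, ∑ z, (T g) z * b j z = 0 := by
          intro j
          have := congrFun hg j
          simpa [hGapp] using this
        have hTg : ∑ z, (T g) z * (T g) z = 0 := by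
          have := dot_sum_swap (T g) g b
          rw [← hT g] at this
          rw [this]
          exact Finset.sum_eq_zero fun j _ => by rw [hz j, mul_zero]
        have hTg0 : T g = 0 := by
          funext z
          have hnn : ∀ z ∈ Finset.univ, 0 ≤ (T g) z * (T g) z :=
            fun z _ => mul_self_nonneg _
          have := (Finset.sum_eq_zero_iff_of_nonneg hnn).mp hTg z (Finset.mem_univ z)
          exact mul_self_eq_zero.mp this
        have := hcoef g (by rw [← hT g]; exact hTg0)
        exact this
      · intro hg; rw [hg]; exact map_zero G
    have hGsurj : Function.Surjective G := LinearMap.injective_iff_surjective.mp hGinj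
    obtain ⟨cvec, hcvec⟩ :=
      hGsurj (Sum.elim (fun _ => (1 : ℝ)) (Sum.elim (fun _ => (-1 : ℝ)) fun _ => 0))
    set e : Z → ℝ := T cvec with he
    have he_u : ∀ i, ∑ z, e z * u i z = 1 := by
      intro i
      have := congrFun hcvec (Sum.inl i)
      simpa [hGapp, hb, he] using this
    have he_v : ∀ i, ∑ z, e z * v i z = -1 := by
      intro i
      have := congrFun hcvec (Sum.inr (Sum.inl i))
      simpa [hGapp, hb, he] using this
    have he_1 : ∑ z, e z = 0 := by
      have := congrFun hcvec (Sum.inr (Sum.inr ()))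
      have hb1 : b (Sum.inr (Sum.inr ())) = (1 : Z → ℝ) := rfl
      simpa [hGapp, hb1] using this
    -- bound on U₀
    have hcont : Continuous (fun w : Z → ℝ => ∑ z, e z * w z) :=
      continuous_finset_sum _ fun z _ => continuous_const.mul (continuous_apply z)
    obtain ⟨M, hM⟩ := hU₀cpt.exists_bound_of_continuousOn hcont.continuousOn
    obtain ⟨w₀, hw₀⟩ := hU₀ne
    have hM0 : 0 ≤ M := le_trans (norm_nonneg _) (hM w₀ hw₀)
    -- representing vector of f
    set d0 : Z → ℝ := fun z => f (Pi.single z (1:ℝ)) with hd0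
    have hrepr : ∀ w : Z → ℝ, ∑ z, d0 z * w z = f w := by
      intro w
      have hsum : (∑ z, w z • (Pi.single z 1 : Z → ℝ)) = w := by
        have : ∀ z : Z, w z • (Pi.single z 1 : Z → ℝ) = (Pi.single z (w z) : Z → ℝ) := by
          intro z
          funext z'
          simp only [Pi.smul_apply, smul_eq_mul, Pi.single_apply]
          split <;> simp
        simp only [this]
        exact Finset.univ_sum_single w
      calc ∑ z, d0 z * w z = ∑ z, f (w z • (Pi.single z 1 : Z → ℝ)) := by
            refine Finset.sum_congr rfl fun z _ => ?_
            rw [map_smul, smul_eq_mul, hd0]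
            ring
        _ = f (∑ z, w z • (Pi.single z 1 : Z → ℝ)) := (map_sum f _ _).symm
        _ = f w := by rw [hsum]
    set ε : ℝ := -s₁ / (2 * (M + 1)) with hε
    have hεpos : 0 < ε := div_pos (by linarith) (by linarith)
    set d : Z → ℝ := fun z => d0 z + ε * e z with hd
    have hd_sum : ∑ z, d z = 0 := by
      have h1 : ∑ z, d0 z = 0 := by
        have := hrepr (1 : Z → ℝ)
        simpa [hf1] using this
      simp [hd, Finset.sum_add_distrib, ← Finset.mul_sum, h1, he_1]
    have hd_dot : ∀ w : Z → ℝ, ∑ z, d z * w z = f w + ε * ∑ z, e z * w z := by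
      intro w
      rw [← hrepr w]
      simp [hd, add_mul, Finset.sum_add_distrib, Finset.mul_sum, mul_assoc]
    have hdu : ∀ i, 0 < ∑ z, d z * u i z := by
      intro i
      rw [hd_dot, he_u]
      have := hfu i
      linarith
    have hdv : ∀ i, ∑ z, d z * v i z < 0 := by
      intro i
      rw [hd_dot, he_v]
      have := hfv i
      linarith
    have hdw : ∀ w ∈ U₀, ∑ z, d z * w z < 0 := by
      intro w hw
      rw [hd_dot]
      have h1 : f w < s₁ := hfU w hw
      have h2 : ∑ z, e z * w z ≤ M := le_trans (le_abs_self _) (hM w hw)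
      have h3 : ε * ∑ z, e z * w z ≤ ε * M :=
        mul_le_mul_of_nonneg_left h2 hεpos.le
      have h4 : ε * (M + 1) = -s₁ / 2 := by
        rw [hε]
        field_simp
      nlinarith
    -- construct the lotteries
    set N : ℝ := (Fintype.card Z : ℝ) with hN
    have hNpos : 0 < N := by
      rw [hN]
      exact_mod_cast Fintype.card_pos
    set Md : ℝ := ∑ z, |d z| with hMd
    have hMd0 : 0 ≤ Md := Finset.sum_nonneg fun z _ => abs_nonneg _
    have hMdz : ∀ z, |d z| ≤ Md :=
      fun z => Finset.single_le_sum (fun z _ => abs_nonneg (d z)) (Finset.mem_univ z)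
    set τ : ℝ := (N * (Md + 1))⁻¹ with hτ
    have hτpos : 0 < τ := by
      rw [hτ]
      positivity
    have hτMd : τ * Md < N⁻¹ := by
      rw [hτ, inv_eq_one_div, inv_eq_one_div, div_mul_eq_mul_div,
        div_lt_div_iff₀ (by positivity) hNpos]
      nlinarith
    set l' : Z → ℝ := fun _ => N⁻¹ with hl'def
    set l : Z → ℝ := fun z => N⁻¹ + τ * d z with hldef
    have hsuml' : ∑ _z : Z, N⁻¹ = 1 := by
      rw [Finset.sum_const, nsmul_eq_mul, Finset.card_univ, ← hN]
      field_simp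
    have hl'lot : IsLottery l' := by
      constructor
      · intro z
        simp [hl'def]
        positivity
      · simpa [hl'def] using hsuml'
    have hllot : IsLottery l := by
      constructor
      · intro z
        have h1 : τ * d z ≥ -(τ * Md) := by
          have := hMdz z
          have h2 : -(Md) ≤ d z := by
            have := neg_abs_le (d z)
            linarith
          nlinarith
        have h5 : N⁻¹ - τ * Md > 0 := by linarith [hτMd]
        show 0 ≤ N⁻¹ + τ * d z
        clear_value N Md τ d
        linarith
      · simp only [hldef]
        rw [Finset.sum_add_distrib, hsuml', ← Finset.mul_sum, hd_sum]
        ring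
    have hEU : ∀ w : Z → ℝ, EU l w - EU l' w = τ * ∑ z, d z * w z := by
      intro w
      calc EU l w - EU l' w = ∑ z, ((N⁻¹ + τ * d z) * w z - N⁻¹ * w z) := by
            simp [EU, hldef, hl'def, Finset.sum_sub_distrib]
        _ = ∑ z, τ * (d z * w z) := Finset.sum_congr rfl fun z _ => by ring
        _ = τ * ∑ z, d z * w z := by rw [← Finset.mul_sum]
    have hinc : ∀ i, ¬ Pref (U i) l l' ∧ ¬ Pref (U i) l' l := by
      intro i
      constructor
      · intro hP
        have h1 := hP (v i) (hv i)
        have h2 := hEU (v i)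
        nlinarith [hdv i, hτpos]
      · intro hP
        have h1 := hP (u i) (hu i)
        have h2 := hEU (u i)
        nlinarith [hdu i, hτpos]
    obtain ⟨-, h2⟩ := hpi l l' hllot hl'lot hinc
    apply h2
    intro w hw
    have h3 := hEU w
    nlinarith [hdw w hw, hτpos]
  -- extract the representation
  obtain ⟨u₀, hu₀U, hu₀C⟩ := Set.not_disjoint_iff.mp hnd
  obtain ⟨g, hgK, hgT⟩ := hu₀C
  have hval : ∀ z, u₀ z = (∑ i, g (Sum.inl i) * u i z) +
      ((∑ i, g (Sum.inr (Sum.inl i)) * v i z) + g (Sum.inr (Sum.inr ()))) := by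
    intro z
    rw [← hgT, hT]
    simp only [Finset.sum_apply, Pi.smul_apply, smul_eq_mul, Fintype.sum_sum_type]
    congr 1
    congr 1
    have hb1 : ∀ x : Unit, b (Sum.inr (Sum.inr x)) z = 1 := fun x => rfl
    simp [hb1]
  refine ⟨u₀, hu₀U, fun i => g (Sum.inl i), fun i => -g (Sum.inr (Sum.inl i)),
    g (Sum.inr (Sum.inr ())), hgK.1, fun i => neg_nonneg.mpr (hgK.2 i), ?_, ?_⟩
  · rintro ⟨hα, hα'⟩
    have hg1 : ∀ i, g (Sum.inl i) = 0 := fun i => congrFun hα i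
    have hg2 : ∀ i, g (Sum.inr (Sum.inl i)) = 0 := by
      intro i
      have := congrFun hα' i
      simpa [neg_eq_zero] using this
    have hconst : ∀ z, u₀ z = g (Sum.inr (Sum.inr ())) := by
      intro z
      rw [hval z]
      simp [hg1, hg2]
    obtain ⟨z, z', hzz⟩ := hU₀nc u₀ hu₀U
    rw [hconst z, hconst z'] at hzz
    exact hzz rfl
  · funext z
    rw [hval z]
    have : ∑ i, -g (Sum.inr (Sum.inl i)) * v i z = -∑ i, g (Sum.inr (Sum.inl i)) * v i z := by
      rw [← Finset.sum_neg_distrib]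
      exact Finset.sum_congr rfl fun i _ => by ring
    rw [this]
    ring
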